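/- Let k ≥ 1 and let G be a bipartite k-extendable graph with bipartition (A, B). Let e = ab and e' = a'b' be edges of G with a, a' ∈ A, b, b' ∈ B, sharing no endpoint, and such that a is adjacent to b' in G. Then the graph H obtained from G by deleting the edges e and e' is (k−1)-extendable; that is, H has a matching consisting of k−1 edges and every matching of H consisting of k−1 edges is contained in a perfect matching of H (for k = 1 this says H has a perfect matching). -/

import Mathlib

open SimpleGraph

/-- The degree of a vertex `v` in a graph `G`: the number of neighbours of `v`. -/
noncomputable def degN {V : Type*} (G : SimpleGraph V) (v : V) : ℕ :=
  (G.neighborSet v).ncard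

def coverSet {V : Type*} (F : Set (Sym2 V)) : Set V := {v | ∃ e ∈ F, v ∈ e}

/-- A matching of `G` given as a set of edges of `G`, no two of which share an endpoint. -/
def IsMatchingSet {V : Type*} (G : SimpleGraph V) (F : Set (Sym2 V)) : Prop :=
  F ⊆ G.edgeSet ∧ ∀ e₁ ∈ F, ∀ e₂ ∈ F, e₁ ≠ e₂ → ∀ u ∈ e₁, u ∉ e₂

/-- `G` is `k`-extendable: connected, of order at least `2k+2`, has a matching of `k` edges,
and every matching of `k` edges is contained in a perfect matching of `G`. -/
def KExtendable {V : Type*} [Fintype V] (G : SimpleGraph V) (k : ℕ) : Prop :=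
  G.Connected ∧ 2 * k + 2 ≤ Fintype.card V ∧
    (∃ F : Set (Sym2 V), IsMatchingSet G F ∧ F.ncard = k) ∧
    ∀ F : Set (Sym2 V), IsMatchingSet G F → F.ncard = k →
      ∃ M : G.Subgraph, M.IsPerfectMatching ∧ F ⊆ M.edgeSet


lemma edge_vertexSet {V : Type*} (x y : V) : {v | v ∈ s(x,y)} = {x, y} := by
  ext u; simp [Sym2.mem_iff]

lemma edge_ncard_le {V : Type*} (e : Sym2 V) : ({v | v ∈ e} : Set V).ncard ≤ 2 := by
  induction e using Sym2.ind with
  | _ x y =>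
    rw [edge_vertexSet]
    calc ({x, y} : Set _).ncard ≤ ({y} : Set _).ncard + 1 := Set.ncard_insert_le _ _
    _ ≤ 2 := by simp

lemma coverSet_ncard_le {V : Type*} {F : Set (Sym2 V)} (hF : F.Finite) :
    (coverSet F).ncard ≤ 2 * F.ncard := by
  classical
  refine Set.Finite.induction_on (motive := fun F _ => (coverSet F).ncard ≤ 2 * F.ncard) F hF
    (by simp [coverSet]) ?_
  intro e F he hFfin ih
  have hcov : coverSet (insert e F) = {v | v ∈ e} ∪ coverSet F := by
    ext u; simp [coverSet]
  rw [hcov, Set.ncard_insert_of_notMem he hFfin]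
  calc ({v | v ∈ e} ∪ coverSet F).ncard ≤ ({v | v ∈ e} : Set _).ncard + (coverSet F).ncard :=
        Set.ncard_union_le _ _
    _ ≤ 2 + 2 * F.ncard := by have := edge_ncard_le e; omega
    _ = 2 * (F.ncard + 1) := by ring

/-- an edge of a bipartite graph has at most one endpoint in `A` -/
lemma edge_one_side {V : Type*} {G : SimpleGraph V} {A B : Set V}
    (hpart : ∀ v, v ∈ A ↔ v ∉ B)
    (hbip : ∀ u v, G.Adj u v → (u ∈ A ∧ v ∈ B) ∨ (u ∈ B ∧ v ∈ A))
    {e : Sym2 V} (he : e ∈ G.edgeSet) {u w : V} (hu : u ∈ e) (hw : w ∈ e)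
    (huA : u ∈ A) (hwA : w ∈ A) : u = w := by
  induction e using Sym2.ind with
  | _ x y =>
    rw [mem_edgeSet] at he
    rw [Sym2.mem_iff] at hu hw
    by_contra hne
    have hadj : G.Adj u w := by
      rcases hu with rfl | rfl <;> rcases hw with rfl | rfl
      · exact absurd rfl hne
      · exact he
      · exact he.symm
      · exact absurd rfl hne
    rcases hbip u w hadj with ⟨_, hw2⟩ | ⟨hu2, _⟩
    · exact (hpart w).mp hwA hw2
    · exact (hpart u).mp huA hu2

lemma cover_inter_ncard_le {V : Type*} [Fintype V] {G : SimpleGraph V} {A B : Set V}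
    (hpart : ∀ v, v ∈ A ↔ v ∉ B)
    (hbip : ∀ u v, G.Adj u v → (u ∈ A ∧ v ∈ B) ∨ (u ∈ B ∧ v ∈ A))
    {F : Set (Sym2 V)} (hFE : F ⊆ G.edgeSet) :
    (coverSet F ∩ A).ncard ≤ F.ncard := by
  classical
  have hch : ∀ v ∈ coverSet F ∩ A, ∃ e, e ∈ F ∧ v ∈ e := fun v hv => by
    obtain ⟨e, he, hve⟩ := hv.1; exact ⟨e, he, hve⟩
  set f : V → Sym2 V := fun v =>
    if h : ∃ e, e ∈ F ∧ v ∈ e then h.choose else s(v, v) with hf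
  apply Set.ncard_le_ncard_of_injOn f
  · intro v hv
    have h := hch v hv
    simp only [hf, dif_pos h]
    exact h.choose_spec.1
  · intro u hu w hw hfe
    have hu' := hch u hu
    have hw' := hch w hw
    simp only [hf, dif_pos hu', dif_pos hw'] at hfe
    have h1 : u ∈ hw'.choose := hfe ▸ hu'.choose_spec.2
    exact edge_one_side hpart hbip (hFE hw'.choose_spec.1) h1 hw'.choose_spec.2 hu.2 hw.2

/-- in a matching subgraph, an edge containing `v` equals `s(v, partner)` -/
lemma matching_edge_eq {V : Type*} {G : SimpleGraph V} {M : G.Subgraph}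
    (hM : M.IsMatching) {e : Sym2 V} (he : e ∈ M.edgeSet) {v w : V}
    (hv : v ∈ e) (hw : M.Adj v w) : e = s(v, w) := by
  induction e using Sym2.ind with
  | _ x y =>
    rw [Subgraph.mem_edgeSet] at he
    rw [Sym2.mem_iff] at hv
    obtain ⟨u, _, huniq⟩ := hM (M.edge_vert hw)
    rcases hv with rfl | rfl
    · have : y = w := (huniq y he).trans (huniq w hw).symm
      rw [this]
    · have : x = w := (huniq x he.symm).trans (huniq w hw).symm
      rw [Sym2.eq_swap, this]

lemma matching_edges_disjoint {V : Type*} {G : SimpleGraph V} {M : G.Subgraph}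
    (hM : M.IsMatching) {e₁ e₂ : Sym2 V} (h1 : e₁ ∈ M.edgeSet) (h2 : e₂ ∈ M.edgeSet)
    (hne : e₁ ≠ e₂) {u : V} (hu1 : u ∈ e₁) (hu2 : u ∈ e₂) : False := by
  have hw : ∃ w, M.Adj u w := by
    induction e₁ using Sym2.ind with
    | _ x y =>
      rw [Subgraph.mem_edgeSet] at h1
      rw [Sym2.mem_iff] at hu1
      rcases hu1 with rfl | rfl
      · exact ⟨y, h1⟩
      · exact ⟨x, h1.symm⟩
  obtain ⟨w, hw⟩ := hw
  exact hne ((matching_edge_eq hM h1 hu1 hw).trans (matching_edge_eq hM h2 hu2 hw).symm)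

/-- every vertex is covered by an edge of a perfect matching -/
lemma pm_cover {V : Type*} {G : SimpleGraph V} {M : G.Subgraph}
    (hM : M.IsPerfectMatching) (v : V) : ∃ e ∈ M.edgeSet, v ∈ e := by
  obtain ⟨w, hw, -⟩ := (Subgraph.isPerfectMatching_iff (M := M)).mp hM v
  exact ⟨s(v, w), Subgraph.mem_edgeSet.mpr hw, Sym2.mem_mk_left v w⟩

lemma pm_edgeSet_card {V : Type*} [Fintype V] {G : SimpleGraph V} {M : G.Subgraph}
    (hM : M.IsPerfectMatching) : Fintype.card V ≤ 2 * M.edgeSet.ncard := by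
  have h1 : (Set.univ : Set V) ⊆ coverSet M.edgeSet := fun v _ => pm_cover hM v
  calc Fintype.card V = (Set.univ : Set V).ncard := by
        rw [Set.ncard_univ, Nat.card_eq_fintype_card]
    _ ≤ (coverSet M.edgeSet).ncard := Set.ncard_le_ncard h1 (Set.toFinite _)
    _ ≤ 2 * M.edgeSet.ncard := coverSet_ncard_le (Set.toFinite _)

/-- Key expansion lemma: in a `k`-extendable graph, every nonempty set of at most `k`
vertices has strictly expanding neighbourhood. -/
lemma expansion {V : Type*} [Fintype V] {G : SimpleGraph V} {k : ℕ}
    (hext : KExtendable G k) {S : Set V} (hne : S.Nonempty) (hSk : S.ncard ≤ k) :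
    S.ncard + 1 ≤ {w | ∃ y ∈ S, G.Adj y w}.ncard := by
  classical
  obtain ⟨hconn, hcard, ⟨F₀, hF₀m, hF₀c⟩, hextend⟩ := hext
  obtain ⟨M₀, hM₀, -⟩ := hextend F₀ hF₀m hF₀c
  set NS := {w | ∃ y ∈ S, G.Adj y w} with hNSdef
  by_contra hlt
  push_neg at hlt
  have hNSk : NS.ncard ≤ S.ncard := by omega
  by_cases hedge : ∃ x w, G.Adj x w ∧ w ∈ NS ∧ x ∉ S
  · obtain ⟨x, w, hxw, hwNS, hxS⟩ := hedge
    have hxwne : x ≠ w := hxw.ne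
    -- count of PM edges
    have hM0count : k + 1 ≤ M₀.edgeSet.ncard := by
      have := pm_edgeSet_card hM₀; omega
    -- partners of x and w
    obtain ⟨px, hpx, -⟩ := (Subgraph.isPerfectMatching_iff (M := M₀)).mp hM₀ x
    obtain ⟨pw, hpw, -⟩ := (Subgraph.isPerfectMatching_iff (M := M₀)).mp hM₀ w
    set D : Set (Sym2 V) := {e ∈ M₀.edgeSet | x ∈ e ∨ w ∈ e} with hDdef
    have hDsub : D ⊆ {s(x, px), s(w, pw)} := by
      rintro e ⟨heM, hmem | hmem⟩
      · exact Or.inl (matching_edge_eq hM₀.1 heM hmem hpx)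
      · exact Or.inr (matching_edge_eq hM₀.1 heM hmem hpw)
    have hD2 : D.ncard ≤ 2 := by
      calc D.ncard ≤ ({s(x, px), s(w, pw)} : Set (Sym2 V)).ncard :=
            Set.ncard_le_ncard hDsub (Set.toFinite _)
        _ ≤ ({s(w, pw)} : Set (Sym2 V)).ncard + 1 := Set.ncard_insert_le _ _
        _ ≤ 2 := by simp
    have hPcard : k - 1 ≤ (M₀.edgeSet \ D).ncard := by
      have := Set.le_ncard_diff D M₀.edgeSet (Set.toFinite _)
      omega
    obtain ⟨P, hPsub, hPcard'⟩ := Set.exists_subset_card_eq hPcard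
    -- the k-matching
    set Fs : Set (Sym2 V) := insert s(x, w) P with hFsdef
    have hPavoid : ∀ e ∈ P, x ∉ e ∧ w ∉ e := by
      intro e he
      have h2 := (hPsub he).2
      simp only [hDdef, Set.mem_setOf_eq, not_and, not_or] at h2
      exact h2 (hPsub he).1
    have hFsm : IsMatchingSet G Fs := by
      constructor
      · rintro e (rfl | he)
        · exact G.mem_edgeSet.mpr hxw
        · exact M₀.edgeSet_subset ((hPsub he).1)
      · rintro e₁ (rfl | he₁) e₂ (rfl | he₂) hne u hu1 hu2
        · exact hne rfl
        · rcases Sym2.mem_iff.mp hu1 with rfl | rfl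
          · exact (hPavoid _ he₂).1 hu2
          · exact (hPavoid _ he₂).2 hu2
        · rcases Sym2.mem_iff.mp hu2 with rfl | rfl
          · exact (hPavoid _ he₁).1 hu1
          · exact (hPavoid _ he₁).2 hu1
        · exact matching_edges_disjoint hM₀.1 (hPsub he₁).1 (hPsub he₂).1 hne hu1 hu2
    have hFscard : Fs.ncard = k := by
      have hxwP : s(x, w) ∉ P := fun h => (hPavoid _ h).1 (Sym2.mem_mk_left x w)
      rw [hFsdef, Set.ncard_insert_of_notMem hxwP (Set.toFinite _), hPcard']
      have h1k : 1 ≤ k := le_trans ((Set.ncard_pos (Set.toFinite S)).mpr hne) hSk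
      omega
    obtain ⟨M₂, hM₂, hFsM₂⟩ := hextend Fs hFsm hFscard
    -- partner function in M₂
    have hpart2 := fun v => (Subgraph.isPerfectMatching_iff (M := M₂)).mp hM₂ v
    set φ : V → V := fun v => (hpart2 v).choose with hφ
    have hφadj : ∀ v, M₂.Adj v (φ v) := fun v => (hpart2 v).choose_spec.1
    have hφuniq : ∀ v w, M₂.Adj v w → w = φ v := fun v w h => (hpart2 v).choose_spec.2 w h
    -- x is the partner of w in M₂
    have hxM₂ : M₂.Adj x w := Subgraph.mem_edgeSet.mp (hFsM₂ (Set.mem_insert _ _))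
    have hmaps : ∀ y ∈ S, φ y ∈ NS \ {w} := by
      intro y hy
      refine ⟨⟨y, hy, M₂.adj_sub (hφadj y)⟩, ?_⟩
      intro hyw
      simp only [Set.mem_singleton_iff] at hyw
      have h1 : M₂.Adj w y := hyw ▸ (hφadj y).symm
      have h2 : y = φ w := hφuniq w y h1
      have h3 : x = φ w := hφuniq w x hxM₂.symm
      have h4 : φ w ∈ S := h2 ▸ hy
      rw [← h3] at h4
      exact hxS h4
    have hinj : Set.InjOn φ S := by
      intro y hy y' hy' heq
      have h1 : M₂.Adj (φ y) y := (hφadj y).symm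
      have h2 : M₂.Adj (φ y) y' := heq ▸ (hφadj y').symm
      rw [hφuniq _ _ h1, hφuniq _ _ h2]
    have hle : S.ncard ≤ (NS \ {w}).ncard :=
      Set.ncard_le_ncard_of_injOn φ hmaps hinj (Set.toFinite _)
    have hlt2 : (NS \ {w}).ncard < NS.ncard :=
      Set.ncard_diff_singleton_lt_of_mem hwNS (Set.toFinite _)
    omega
  · -- no edge leaves S ∪ NS, contradicting connectivity
    push_neg at hedge
    obtain ⟨s₀, hs₀⟩ := hne
    have key : ∀ {z u : V}, G.Walk z u → u ∈ S → z ∈ S ∪ NS := by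
      intro z u p
      induction p with
      | nil => exact fun h => Or.inl h
      | @cons x₁ x₂ x₃ h q ih =>
        intro hu
        rcases ih hu with hv | hv
        · exact Or.inr ⟨x₂, hv, h.symm⟩
        · exact Or.inl (hedge x₁ x₂ h hv)
    have hclosed : ∀ z : V, z ∈ S ∪ NS := by
      intro z
      obtain ⟨p⟩ := (hconn.preconnected z s₀)
      exact key p hs₀
    have huniv : (Set.univ : Set V) ⊆ S ∪ NS := fun z _ => hclosed z
    have h1 : Fintype.card V ≤ (S ∪ NS).ncard := by
      calc Fintype.card V = (Set.univ : Set V).ncard := by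
            rw [Set.ncard_univ, Nat.card_eq_fintype_card]
        _ ≤ _ := Set.ncard_le_ncard huniv (Set.toFinite _)
    have h2 : (S ∪ NS).ncard ≤ S.ncard + NS.ncard := Set.ncard_union_le _ _
    omega

/-- In a bipartite `k`-extendable graph, a vertex `v ∈ A` has a neighbour outside any
set of at most `k` vertices. -/
lemma nbr_outside {V : Type*} [Fintype V] {G : SimpleGraph V} {k : ℕ} {A B : Set V}
    (hpart : ∀ v, v ∈ A ↔ v ∉ B)
    (hbip : ∀ u v, G.Adj u v → (u ∈ A ∧ v ∈ B) ∨ (u ∈ B ∧ v ∈ A))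
    (hext : KExtendable G k) {v : V} (hv : v ∈ A) {Z : Set V} (hZ : Z.ncard ≤ k) :
    ∃ x, G.Adj v x ∧ x ∉ Z := by
  classical
  by_contra hcon
  push_neg at hcon
  -- all neighbours of v are in Z ∩ B
  have hNB : ∀ x, G.Adj v x → x ∈ B := by
    intro x hx
    rcases hbip v x hx with ⟨_, h⟩ | ⟨h, _⟩
    · exact h
    · exact absurd h ((hpart v).mp hv)
  -- B is large
  obtain ⟨hconn, hcard, ⟨F₀, hF₀m, hF₀c⟩, hextend⟩ := hext
  obtain ⟨M₀, hM₀, -⟩ := hextend F₀ hF₀m hF₀c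
  have hpart0 := fun u => (Subgraph.isPerfectMatching_iff (M := M₀)).mp hM₀ u
  set ψ : V → V := fun u => (hpart0 u).choose with hψ
  have hψadj : ∀ u, M₀.Adj u (ψ u) := fun u => (hpart0 u).choose_spec.1
  have hψuniq : ∀ u w, M₀.Adj u w → w = ψ u := fun u w h => (hpart0 u).choose_spec.2 w h
  have hAB : A.ncard ≤ B.ncard := by
    apply Set.ncard_le_ncard_of_injOn ψ
    · intro u hu
      rcases hbip u (ψ u) (M₀.adj_sub (hψadj u)) with ⟨_, h⟩ | ⟨h, _⟩
      · exact h
      · exact absurd h ((hpart u).mp hu)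
    · intro u hu u' hu' heq
      have h1 : M₀.Adj (ψ u) u := (hψadj u).symm
      have h2 : M₀.Adj (ψ u) u' := heq ▸ (hψadj u').symm
      rw [hψuniq _ _ h1, hψuniq _ _ h2]
  have hcardAB : A.ncard + B.ncard = Fintype.card V := by
    have hdisj : Disjoint A B := Set.disjoint_left.mpr (fun u hu => (hpart u).mp hu)
    have hcover : A ∪ B = Set.univ := by
      ext u
      simp only [Set.mem_union, Set.mem_univ, iff_true]
      by_cases h : u ∈ A
      · exact Or.inl h
      · exact Or.inr (by by_contra hB; exact h ((hpart u).mpr hB))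
    rw [← Set.ncard_union_eq hdisj (Set.toFinite _) (Set.toFinite _), hcover,
      Set.ncard_univ, Nat.card_eq_fintype_card]
  have hBk : k ≤ B.ncard := by omega
  -- choose a k-set S⁺ of B containing Z ∩ B
  have hZB : (Z ∩ B).ncard ≤ k := le_trans (Set.ncard_le_ncard Set.inter_subset_left
    (Set.toFinite _)) hZ
  obtain ⟨Sp, hZSp, hSpB, hSpcard⟩ :=
    Set.exists_subsuperset_card_eq Set.inter_subset_right hZB hBk
  -- Hall's condition for saturating S⁺ in G - v
  set t : ↥Sp → Finset V := fun x => (Set.toFinite (G.neighborSet ↑x \ {v})).toFinset with ht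
  have hhall : ∀ s : Finset ↥Sp, s.card ≤ (s.biUnion t).card := by
    intro s
    rcases s.eq_empty_or_nonempty with rfl | hsne
    · simp
    set S' : Set V := ↑(s.image (Subtype.val)) with hS'
    have hS'card : S'.ncard = s.card := by
      rw [hS', Set.ncard_coe_finset, Finset.card_image_of_injective _ Subtype.val_injective]
    have hS'ne : S'.Nonempty := by
      obtain ⟨x, hx⟩ := hsne
      refine ⟨↑x, ?_⟩
      simp only [hS', Finset.coe_image, Set.mem_image, Finset.mem_coe]
      exact ⟨x, hx, rfl⟩
    have hS'k : S'.ncard ≤ k := by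
      rw [← hSpcard]
      apply Set.ncard_le_ncard _ (Set.toFinite _)
      intro u hu
      simp only [hS', Finset.coe_image, Set.mem_image, Finset.mem_coe] at hu
      obtain ⟨x, -, rfl⟩ := hu
      exact x.2
    have hexp := expansion ⟨hconn, hcard, ⟨F₀, hF₀m, hF₀c⟩, hextend⟩ hS'ne hS'k
    set NS' := {w | ∃ y ∈ S', G.Adj y w} with hNS'
    have hsub : NS' \ {v} ⊆ ↑(s.biUnion t) := by
      rintro z ⟨⟨y, hyS', hadj⟩, hzv⟩
      simp only [hS', Finset.coe_image, Set.mem_image, Finset.mem_coe] at hyS'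
      obtain ⟨x, hx, rfl⟩ := hyS'
      simp only [Finset.coe_biUnion, Set.mem_iUnion, Finset.mem_coe]
      refine ⟨x, hx, ?_⟩
      simp only [ht, Set.Finite.mem_toFinset, Set.mem_diff, mem_neighborSet,
        Set.mem_singleton_iff]
      exact ⟨hadj, by simpa using hzv⟩
    have h1 : (NS' \ {v}).ncard ≤ (s.biUnion t).card := by
      rw [← Set.ncard_coe_finset]
      exact Set.ncard_le_ncard hsub (Set.toFinite _)
    have h2 : NS'.ncard - 1 ≤ (NS' \ {v}).ncard := Set.pred_ncard_le_ncard_diff_singleton _ _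
    omega
  obtain ⟨f, hfinj, hf⟩ := (Finset.all_card_le_biUnion_card_iff_exists_injective t).mp hhall
  have hfadj : ∀ x : ↥Sp, G.Adj ↑x (f x) ∧ f x ≠ v := by
    intro x
    have := hf x
    simp only [ht, Set.Finite.mem_toFinset, Set.mem_diff, mem_neighborSet,
      Set.mem_singleton_iff] at this
    exact this
  have hSpB' : ∀ x : ↥Sp, (↑x : V) ∈ B := fun x => hSpB x.2
  have hfA : ∀ x : ↥Sp, f x ∈ A := by
    intro x
    rcases hbip ↑x (f x) ((hfadj x).1) with ⟨h, _⟩ | ⟨_, h⟩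
    · exact absurd (hSpB' x) ((hpart ↑x).mp h)
    · exact h
  have hne2 : ∀ (x y : ↥Sp), (↑x : V) ≠ f y := by
    intro x y heq
    exact (hpart (f y)).mp (hfA y) (heq ▸ hSpB' x)
  -- the k-matching saturating S⁺
  set g : ↥Sp → Sym2 V := fun x => s(↑x, f x) with hg
  have hginj : Function.Injective g := by
    intro x y hxy
    rw [hg] at hxy
    simp only [Sym2.eq_iff] at hxy
    rcases hxy with ⟨h1, -⟩ | ⟨h1, -⟩
    · exact Subtype.ext h1
    · exact absurd h1 (hne2 x y)
  set Fs : Set (Sym2 V) := Set.range g with hFs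
  have hFsm : IsMatchingSet G Fs := by
    constructor
    · rintro e ⟨x, rfl⟩
      exact G.mem_edgeSet.mpr (hfadj x).1
    · rintro e₁ ⟨x₁, rfl⟩ e₂ ⟨x₂, rfl⟩ hne u hu1 hu2
      rw [hg] at hu1 hu2
      have hx12 : x₁ ≠ x₂ := fun h => hne (h ▸ rfl)
      rcases Sym2.mem_iff.mp hu1 with rfl | rfl <;> rcases Sym2.mem_iff.mp hu2 with h | h
      · exact hx12 (Subtype.ext h)
      · exact hne2 x₁ x₂ h
      · exact hne2 x₂ x₁ h.symm
      · exact hx12 (hfinj h)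
  have hFscard : Fs.ncard = k := by
    rw [hFs, ← Set.image_univ, Set.ncard_image_of_injective _ hginj, Set.ncard_univ,
      Nat.card_coe_set_eq, hSpcard]
  obtain ⟨M₂, hM₂, hFsM₂⟩ := hextend Fs hFsm hFscard
  -- v's partner in M₂ lies in N(v) ⊆ Z ∩ B ⊆ S⁺, contradiction
  obtain ⟨w, hw, -⟩ := (Subgraph.isPerfectMatching_iff (M := M₂)).mp hM₂ v
  have hwadj : G.Adj v w := M₂.adj_sub hw
  have hwSp : w ∈ Sp := hZSp ⟨hcon w hwadj, hNB w hwadj⟩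
  set x : ↥Sp := ⟨w, hwSp⟩ with hx
  have h1 : M₂.Adj w (f x) := Subgraph.mem_edgeSet.mp (hFsM₂ ⟨x, rfl⟩)
  obtain ⟨u, -, huniq⟩ := (Subgraph.isPerfectMatching_iff (M := M₂)).mp hM₂ w
  have : f x = v := (huniq _ h1).trans (huniq _ hw.symm).symm
  exact (hfadj x).2 this

lemma pm_to_deleted {V : Type*} {G : SimpleGraph V} (s : Set (Sym2 V)) (M₂ : G.Subgraph)
    (hM : M₂.IsPerfectMatching) (hs : ∀ e ∈ s, e ∉ M₂.edgeSet) :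
    ∃ M : (G.deleteEdges s).Subgraph, M.IsPerfectMatching ∧ M₂.edgeSet ⊆ M.edgeSet := by
  refine ⟨⟨Set.univ, M₂.Adj, ?_, fun {v w} _ => Set.mem_univ v, M₂.symm⟩, ⟨?_, fun v => Set.mem_univ v⟩, ?_⟩
  · intro v w h
    rw [SimpleGraph.deleteEdges_adj]
    exact ⟨M₂.adj_sub h, fun hmem => hs _ hmem (Subgraph.mem_edgeSet.mpr h)⟩
  · intro v _
    exact (Subgraph.isPerfectMatching_iff (M := M₂)).mp hM v
  · intro e he
    induction e using Sym2.ind with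
    | _ x y => exact Subgraph.mem_edgeSet.mpr (Subgraph.mem_edgeSet.mp he)

lemma insert_matching {V : Type*} {G' : SimpleGraph V} {F : Set (Sym2 V)}
    (hFm : IsMatchingSet G' F) {g : Sym2 V} (hg : g ∈ G'.edgeSet)
    (hgC : ∀ u ∈ g, u ∉ coverSet F) : IsMatchingSet G' (insert g F) := by
  constructor
  · rintro e (rfl | he)
    · exact hg
    · exact hFm.1 he
  · rintro e₁ (rfl | he₁) e₂ (rfl | he₂) hne u hu1 hu2
    · exact hne rfl
    · exact hgC u hu1 ⟨e₂, he₂, hu2⟩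
    · exact hgC u hu2 ⟨e₁, he₁, hu1⟩
    · exact hFm.2 e₁ he₁ e₂ he₂ hne u hu1 hu2

lemma insert_ncard {V : Type*} {F : Set (Sym2 V)} (hF : F.Finite) {g : Sym2 V}
    (hgC : ∀ u ∈ g, u ∉ coverSet F) : (insert g F).ncard = F.ncard + 1 := by
  have hmem : ∃ u, u ∈ g := by
    induction g using Sym2.ind with
    | _ x y => exact ⟨x, Sym2.mem_mk_left x y⟩
  obtain ⟨u, hu⟩ := hmem
  have hgF : g ∉ F := fun h => hgC u hu ⟨g, h, hu⟩
  exact Set.ncard_insert_of_notMem hgF hF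

/-- common ending: a `(k-1)`-matching of the deleted graph plus one fresh `G`-edge whose
insertion blocks both deleted edges extends to a perfect matching of the deleted graph. -/
lemma main_tail {V : Type*} [Fintype V] {G : SimpleGraph V} {k : ℕ} (hk : 1 ≤ k)
    (hextend : ∀ F : Set (Sym2 V), IsMatchingSet G F → F.ncard = k →
      ∃ M : G.Subgraph, M.IsPerfectMatching ∧ F ⊆ M.edgeSet)
    {e1 e2 : Sym2 V} {F : Set (Sym2 V)}
    (hFm : IsMatchingSet (G.deleteEdges {e1, e2}) F) (hFc : F.ncard = k - 1)
    {g : Sym2 V} (hgG : g ∈ G.edgeSet) (hgC : ∀ u ∈ g, u ∉ coverSet F)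
    (blk1 : ∃ e ∈ insert g F, e ≠ e1 ∧ ∃ u, u ∈ e ∧ u ∈ e1)
    (blk2 : ∃ e ∈ insert g F, e ≠ e2 ∧ ∃ u, u ∈ e ∧ u ∈ e2) :
    ∃ M : (G.deleteEdges {e1, e2}).Subgraph, M.IsPerfectMatching ∧ F ⊆ M.edgeSet := by
  have hFG : IsMatchingSet G F := by
    refine ⟨fun e he => ?_, hFm.2⟩
    have := hFm.1 he
    rw [edgeSet_deleteEdges] at this
    exact this.1
  have hFsm : IsMatchingSet G (insert g F) := insert_matching hFG hgG hgC
  have hFscard : (insert g F).ncard = k := by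
    rw [insert_ncard (Set.toFinite F) hgC, hFc]; omega
  obtain ⟨M₂, hM₂, hFsM₂⟩ := hextend _ hFsm hFscard
  have not1 : e1 ∉ M₂.edgeSet := by
    obtain ⟨e, he, hne, u, hue, hue1⟩ := blk1
    intro h1
    exact matching_edges_disjoint hM₂.1 (hFsM₂ he) h1 hne hue hue1
  have not2 : e2 ∉ M₂.edgeSet := by
    obtain ⟨e, he, hne, u, hue, hue2⟩ := blk2
    intro h2
    exact matching_edges_disjoint hM₂.1 (hFsM₂ he) h2 hne hue hue2
  obtain ⟨M, hMpm, hsub⟩ := pm_to_deleted {e1, e2} M₂ hM₂ (by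
    intro e he
    rcases he with rfl | he
    · exact not1
    · rw [Set.mem_singleton_iff] at he
      exact he ▸ not2)
  exact ⟨M, hMpm, fun e he => hsub (hFsM₂ (Set.mem_insert_of_mem _ he))⟩

theorem stmt18 {V : Type*} [Fintype V] (G : SimpleGraph V) (k : ℕ) (hk : 1 ≤ k)
    (A B : Set V) (hpart : ∀ v, v ∈ A ↔ v ∉ B)
    (hbip : ∀ u v, G.Adj u v → (u ∈ A ∧ v ∈ B) ∨ (u ∈ B ∧ v ∈ A))
    (hext : KExtendable G k)
    (a a' b b' : V) (haA : a ∈ A) (ha'A : a' ∈ A) (hbB : b ∈ B) (hb'B : b' ∈ B)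
    (hab : G.Adj a b) (ha'b' : G.Adj a' b')
    (haa' : a ≠ a') (hbb' : b ≠ b') (hab' : a ≠ b') (ha'b : a' ≠ b)
    (hadj : G.Adj a b') :
    (∃ F : Set (Sym2 V),
        IsMatchingSet (G.deleteEdges {s(a, b), s(a', b')}) F ∧ F.ncard = k - 1) ∧
      ∀ F : Set (Sym2 V),
        IsMatchingSet (G.deleteEdges {s(a, b), s(a', b')}) F → F.ncard = k - 1 →
          ∃ M : (G.deleteEdges {s(a, b), s(a', b')}).Subgraph,
            M.IsPerfectMatching ∧ F ⊆ M.edgeSet := by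
  classical
  have hHE : (G.deleteEdges {s(a, b), s(a', b')}).edgeSet
      = G.edgeSet \ {s(a, b), s(a', b')} := edgeSet_deleteEdges _
  have hpartBA : ∀ v, v ∈ B ↔ v ∉ A := by
    intro v
    constructor
    · exact fun hB hA => (hpart v).mp hA hB
    · intro hA; by_contra hB; exact hA ((hpart v).mpr hB)
  have hbipBA : ∀ u v, G.Adj u v → (u ∈ B ∧ v ∈ A) ∨ (u ∈ A ∧ v ∈ B) :=
    fun u v h => (hbip u v h).symm
  have hside : ∀ v : V, v ∈ A ∨ v ∈ B := by
    intro v; by_cases h : v ∈ A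
    · exact Or.inl h
    · exact Or.inr (by by_contra hB; exact h ((hpart v).mpr hB))
  have hnbrB : ∀ v x, v ∈ A → G.Adj v x → x ∈ B := by
    intro v x hvA h
    rcases hbip v x h with ⟨_, h2⟩ | ⟨h2, _⟩
    · exact h2
    · exact absurd h2 ((hpart v).mp hvA)
  have hnbrA : ∀ v x, v ∈ B → G.Adj v x → x ∈ A := by
    intro v x hvB h
    rcases hbip v x h with ⟨h2, _⟩ | ⟨_, h2⟩
    · exact absurd hvB ((hpart v).mp h2)
    · exact h2
  obtain ⟨hconn, hcard, hexm, hextend⟩ := hext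
  have hext' : KExtendable G k := ⟨hconn, hcard, hexm, hextend⟩
  -- distinctness of sides
  have hAB : ∀ u w, u ∈ A → w ∈ B → u ≠ w := fun u w hu hw h =>
    (hpart u).mp hu (h ▸ hw)
  constructor
  · -- existence of a (k-1)-matching in the deleted graph
    have hexists : ∀ j, j ≤ k - 1 →
        ∃ F, IsMatchingSet (G.deleteEdges {s(a, b), s(a', b')}) F ∧ F.ncard = j := by
      intro j
      induction j with
      | zero => exact fun _ => ⟨∅, ⟨Set.empty_subset _, by simp⟩, by simp⟩
      | succ j ih =>
        intro hj
        obtain ⟨F, hFm, hFc⟩ := ih (by omega)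
        have hCcard : (coverSet F).ncard ≤ 2 * j := by
          have := coverSet_ncard_le (Set.toFinite F)
          omega
        have hFG : F ⊆ G.edgeSet := by
          intro e he
          have := hFm.1 he
          rw [hHE] at this
          exact this.1
        -- an uncovered vertex
        have hunc : ∃ v, v ∉ coverSet F := by
          by_contra hcon
          push_neg at hcon
          have h2 : Fintype.card V ≤ (coverSet F).ncard := by
            calc Fintype.card V = (Set.univ : Set V).ncard := by
                  rw [Set.ncard_univ, Nat.card_eq_fintype_card]
              _ ≤ _ := Set.ncard_le_ncard (fun v _ => hcon v) (Set.toFinite _)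
          omega
        obtain ⟨v, hvC⟩ := hunc
        have hCB : (coverSet F ∩ B).ncard ≤ j :=
          hFc ▸ cover_inter_ncard_le hpartBA hbipBA hFG
        have hCA : (coverSet F ∩ A).ncard ≤ j :=
          hFc ▸ cover_inter_ncard_le hpart hbip hFG
        have hpair : ∀ y z : V, ({y, z} : Set V).ncard ≤ 2 :=
          fun y z => le_trans (Set.ncard_insert_le _ _) (by simp)
        rcases hside v with hvA | hvB
        · -- v ∈ A, find a neighbour outside coverSet ∪ {b, b'}
          have hZ : ((coverSet F ∩ B) ∪ {b, b'}).ncard ≤ k := by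
            have := Set.ncard_union_le (coverSet F ∩ B) ({b, b'} : Set V)
            have := hpair b b'
            omega
          obtain ⟨x, hvx, hxZ⟩ := nbr_outside hpart hbip hext' hvA hZ
          have hxB : x ∈ B := hnbrB v x hvA hvx
          have hxC : x ∉ coverSet F := fun hc => hxZ (Or.inl ⟨hc, hxB⟩)
          have hxb : x ≠ b := fun h => hxZ (Or.inr (by simp [h]))
          have hxb' : x ≠ b' := fun h => hxZ (Or.inr (by simp [h]))
          have hgH : s(v, x) ∈ (G.deleteEdges {s(a, b), s(a', b')}).edgeSet := by
            rw [hHE]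
            refine ⟨G.mem_edgeSet.mpr hvx, ?_⟩
            intro hmem
            simp only [Set.mem_insert_iff, Set.mem_singleton_iff] at hmem
            rcases hmem with h | h
            · rcases Sym2.eq_iff.mp h with ⟨h1, h2⟩ | ⟨h1, h2⟩
              · exact hxb h2
              · exact hAB v b (h1 ▸ hvA) hbB h1
            · rcases Sym2.eq_iff.mp h with ⟨h1, h2⟩ | ⟨h1, h2⟩
              · exact hxb' h2
              · exact hAB v b' (h1 ▸ hvA) hb'B h1
          have hgC : ∀ u ∈ s(v, x), u ∉ coverSet F := by
            intro u hu
            rcases Sym2.mem_iff.mp hu with rfl | rfl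
            · exact hvC
            · exact hxC
          exact ⟨insert s(v, x) F, insert_matching hFm hgH hgC,
            by rw [insert_ncard (Set.toFinite F) hgC, hFc]⟩
        · -- v ∈ B, symmetric
          have hZ : ((coverSet F ∩ A) ∪ {a, a'}).ncard ≤ k := by
            have := Set.ncard_union_le (coverSet F ∩ A) ({a, a'} : Set V)
            have := hpair a a'
            omega
          obtain ⟨x, hvx, hxZ⟩ := nbr_outside hpartBA hbipBA hext' hvB hZ
          have hxA : x ∈ A := hnbrA v x hvB hvx
          have hxC : x ∉ coverSet F := fun hc => hxZ (Or.inl ⟨hc, hxA⟩)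
          have hxa : x ≠ a := fun h => hxZ (Or.inr (by simp [h]))
          have hxa' : x ≠ a' := fun h => hxZ (Or.inr (by simp [h]))
          have hgH : s(v, x) ∈ (G.deleteEdges {s(a, b), s(a', b')}).edgeSet := by
            rw [hHE]
            refine ⟨G.mem_edgeSet.mpr hvx, ?_⟩
            intro hmem
            simp only [Set.mem_insert_iff, Set.mem_singleton_iff] at hmem
            rcases hmem with h | h
            · rcases Sym2.eq_iff.mp h with ⟨h1, h2⟩ | ⟨h1, h2⟩
              · exact hAB a v haA hvB h1.symm
              · exact hxa h2
            · rcases Sym2.eq_iff.mp h with ⟨h1, h2⟩ | ⟨h1, h2⟩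
              · exact hAB a' v ha'A hvB h1.symm
              · exact hxa' h2
          have hgC : ∀ u ∈ s(v, x), u ∉ coverSet F := by
            intro u hu
            rcases Sym2.mem_iff.mp hu with rfl | rfl
            · exact hvC
            · exact hxC
          exact ⟨insert s(v, x) F, insert_matching hFm hgH hgC,
            by rw [insert_ncard (Set.toFinite F) hgC, hFc]⟩
    exact hexists (k - 1) le_rfl
  · -- every (k-1)-matching of the deleted graph extends
    intro F hFm hFc
    have hFG : F ⊆ G.edgeSet := by
      intro e he
      have := hFm.1 he
      rw [hHE] at this
      exact this.1
    have hFne : ∀ e ∈ F, e ≠ s(a, b) ∧ e ≠ s(a', b') := by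
      intro e he
      have := hFm.1 he
      rw [hHE] at this
      have h2 := this.2
      simp only [Set.mem_insert_iff, Set.mem_singleton_iff, not_or] at h2
      exact h2
    have hCB : (coverSet F ∩ B).ncard ≤ k - 1 :=
      hFc ▸ cover_inter_ncard_le hpartBA hbipBA hFG
    have hCA : (coverSet F ∩ A).ncard ≤ k - 1 :=
      hFc ▸ cover_inter_ncard_le hpart hbip hFG
    by_cases hP1 : a ∈ coverSet F ∨ b ∈ coverSet F
    · -- the pair (a,b) is blocked by F itself
      have blk1 : ∃ e ∈ F, e ≠ s(a, b) ∧ ∃ u, u ∈ e ∧ u ∈ s(a, b) := by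
        rcases hP1 with ⟨e, he, hae⟩ | ⟨e, he, hbe⟩
        · exact ⟨e, he, (hFne e he).1, a, hae, Sym2.mem_mk_left a b⟩
        · exact ⟨e, he, (hFne e he).1, b, hbe, Sym2.mem_mk_right a b⟩
      by_cases hP2 : a' ∈ coverSet F ∨ b' ∈ coverSet F
      · -- Case I : both pairs blocked; add an arbitrary fresh edge
        have blk2 : ∃ e ∈ F, e ≠ s(a', b') ∧ ∃ u, u ∈ e ∧ u ∈ s(a', b') := by
          rcases hP2 with ⟨e, he, hae⟩ | ⟨e, he, hbe⟩
          · exact ⟨e, he, (hFne e he).2, a', hae, Sym2.mem_mk_left a' b'⟩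
          · exact ⟨e, he, (hFne e he).2, b', hbe, Sym2.mem_mk_right a' b'⟩
        have hCcard : (coverSet F).ncard ≤ 2 * (k - 1) := by
          have := coverSet_ncard_le (Set.toFinite F)
          omega
        have hunc : ∃ v, v ∉ coverSet F := by
          by_contra hcon
          push_neg at hcon
          have h2 : Fintype.card V ≤ (coverSet F).ncard := by
            calc Fintype.card V = (Set.univ : Set V).ncard := by
                  rw [Set.ncard_univ, Nat.card_eq_fintype_card]
              _ ≤ _ := Set.ncard_le_ncard (fun v _ => hcon v) (Set.toFinite _)
          omega
        obtain ⟨v, hvC⟩ := hunc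
        rcases hside v with hvA | hvB
        · obtain ⟨x, hvx, hxZ⟩ := nbr_outside hpart hbip hext' hvA
            (le_trans hCB (by omega))
          have hxC : x ∉ coverSet F := fun hc => hxZ ⟨hc, hnbrB v x hvA hvx⟩
          have hgC : ∀ u ∈ s(v, x), u ∉ coverSet F := by
            intro u hu
            rcases Sym2.mem_iff.mp hu with rfl | rfl
            · exact hvC
            · exact hxC
          refine main_tail hk hextend hFm hFc (G.mem_edgeSet.mpr hvx) hgC ?_ ?_
          · obtain ⟨e, he, h1, h2⟩ := blk1
            exact ⟨e, Set.mem_insert_of_mem _ he, h1, h2⟩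
          · obtain ⟨e, he, h1, h2⟩ := blk2
            exact ⟨e, Set.mem_insert_of_mem _ he, h1, h2⟩
        · obtain ⟨x, hvx, hxZ⟩ := nbr_outside hpartBA hbipBA hext' hvB
            (le_trans hCA (by omega))
          have hxC : x ∉ coverSet F := fun hc => hxZ ⟨hc, hnbrA v x hvB hvx⟩
          have hgC : ∀ u ∈ s(v, x), u ∉ coverSet F := by
            intro u hu
            rcases Sym2.mem_iff.mp hu with rfl | rfl
            · exact hvC
            · exact hxC
          refine main_tail hk hextend hFm hFc (G.mem_edgeSet.mpr hvx) hgC ?_ ?_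
          · obtain ⟨e, he, h1, h2⟩ := blk1
            exact ⟨e, Set.mem_insert_of_mem _ he, h1, h2⟩
          · obtain ⟨e, he, h1, h2⟩ := blk2
            exact ⟨e, Set.mem_insert_of_mem _ he, h1, h2⟩
      · -- Case II : a', b' uncovered; add an edge at b' missing a'
        push_neg at hP2
        have hZ : ((coverSet F ∩ A) ∪ {a'}).ncard ≤ k := by
          have := Set.ncard_union_le (coverSet F ∩ A) ({a'} : Set V)
          have h1 : ({a'} : Set V).ncard = 1 := Set.ncard_singleton a'
          omega
        obtain ⟨x, hvx, hxZ⟩ := nbr_outside hpartBA hbipBA hext' hb'B hZ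
        have hxA : x ∈ A := hnbrA b' x hb'B hvx
        have hxC : x ∉ coverSet F := fun hc => hxZ (Or.inl ⟨hc, hxA⟩)
        have hxa' : x ≠ a' := fun h => hxZ (Or.inr (by simp [h]))
        have hgC : ∀ u ∈ s(b', x), u ∉ coverSet F := by
          intro u hu
          rcases Sym2.mem_iff.mp hu with rfl | rfl
          · exact hP2.2
          · exact hxC
        refine main_tail hk hextend hFm hFc (G.mem_edgeSet.mpr hvx) hgC ?_ ?_
        · obtain ⟨e, he, h1, h2⟩ := blk1
          exact ⟨e, Set.mem_insert_of_mem _ he, h1, h2⟩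
        · refine ⟨s(b', x), Set.mem_insert _ _, ?_, b', Sym2.mem_mk_left b' x,
            Sym2.mem_mk_right a' b'⟩
          intro h
          rcases Sym2.eq_iff.mp h with ⟨h1, h2⟩ | ⟨h1, h2⟩
          · exact hAB a' b' ha'A hb'B h1.symm
          · exact hxa' h2
    · -- a, b uncovered
      push_neg at hP1
      by_cases hP2 : a' ∈ coverSet F ∨ b' ∈ coverSet F
      · -- Case III : add an edge at a missing b
        have blk2 : ∃ e ∈ F, e ≠ s(a', b') ∧ ∃ u, u ∈ e ∧ u ∈ s(a', b') := by
          rcases hP2 with ⟨e, he, hae⟩ | ⟨e, he, hbe⟩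
          · exact ⟨e, he, (hFne e he).2, a', hae, Sym2.mem_mk_left a' b'⟩
          · exact ⟨e, he, (hFne e he).2, b', hbe, Sym2.mem_mk_right a' b'⟩
        have hZ : ((coverSet F ∩ B) ∪ {b}).ncard ≤ k := by
          have := Set.ncard_union_le (coverSet F ∩ B) ({b} : Set V)
          have h1 : ({b} : Set V).ncard = 1 := Set.ncard_singleton b
          omega
        obtain ⟨x, hvx, hxZ⟩ := nbr_outside hpart hbip hext' haA hZ
        have hxB : x ∈ B := hnbrB a x haA hvx
        have hxC : x ∉ coverSet F := fun hc => hxZ (Or.inl ⟨hc, hxB⟩)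
        have hxb : x ≠ b := fun h => hxZ (Or.inr (by simp [h]))
        have hgC : ∀ u ∈ s(a, x), u ∉ coverSet F := by
          intro u hu
          rcases Sym2.mem_iff.mp hu with rfl | rfl
          · exact hP1.1
          · exact hxC
        refine main_tail hk hextend hFm hFc (G.mem_edgeSet.mpr hvx) hgC ?_ ?_
        · refine ⟨s(a, x), Set.mem_insert _ _, ?_, a, Sym2.mem_mk_left a x,
            Sym2.mem_mk_left a b⟩
          intro h
          rcases Sym2.eq_iff.mp h with ⟨h1, h2⟩ | ⟨h1, h2⟩
          · exact hxb h2
          · exact hAB a b haA hbB h1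
        · obtain ⟨e, he, h1, h2⟩ := blk2
          exact ⟨e, Set.mem_insert_of_mem _ he, h1, h2⟩
      · -- Case IV : all four uncovered; add the edge ab'
        push_neg at hP2
        have hgC : ∀ u ∈ s(a, b'), u ∉ coverSet F := by
          intro u hu
          rcases Sym2.mem_iff.mp hu with rfl | rfl
          · exact hP1.1
          · exact hP2.2
        refine main_tail hk hextend hFm hFc (G.mem_edgeSet.mpr hadj) hgC ?_ ?_
        · refine ⟨s(a, b'), Set.mem_insert _ _, ?_, a, Sym2.mem_mk_left a b',
            Sym2.mem_mk_left a b⟩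
          intro h
          rcases Sym2.eq_iff.mp h with ⟨h1, h2⟩ | ⟨h1, h2⟩
          · exact hbb' h2.symm
          · exact hAB a b haA hbB h1
        · refine ⟨s(a, b'), Set.mem_insert _ _, ?_, b', Sym2.mem_mk_right a b',
            Sym2.mem_mk_right a' b'⟩
          intro h
          rcases Sym2.eq_iff.mp h with ⟨h1, h2⟩ | ⟨h1, h2⟩
          · exact haa' h1
          · exact hab' h1
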